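/- With the coefficients of the uniform order-five 2-stage method (c₁ = 0, u₂, ã₂₁, ã₂₂ as in the order-five family depending on c₂), the equation Γ₂₅(1) = 0, i.e. -(1-u₂(1))/5 + ã₂₁(1) + (1-c₂)⁴ã₂₂(1) = 1/5, has c₂ = (11-√41)/10 as a solution. -/

import Mathlib

/-- The equation Γ₂₅(1) = 0, i.e. -(1-u₂(1))/5 + ã₂₁(1) + (1-c₂)⁴ã₂₂(1) = 1/5,
for the order-five family has c₂ = (11-√41)/10 as a solution. -/
theorem stmt6 :
    (let c₂ : ℝ := (11 - Real.sqrt 41) / 10;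
    let u₂ : ℝ := ((1:ℝ)+1)^2 * (1 - 2*1 + 3*(1:ℝ)^2/(2*c₂-1));
    let ta21 : ℝ := (1:ℝ)^2*((1:ℝ)+1) - (1:ℝ)^2*((1:ℝ)+1)^2*(3*c₂-1)/(2*c₂*(2*c₂-1));
    let ta22 : ℝ := (1:ℝ)^2*((1:ℝ)+1)^2 / (2*c₂*(c₂-1)*(2*c₂-1));
    -(1 - u₂)/5 + ta21 + (1-c₂)^4 * ta22 = 1/5) := by
  have hs : Real.sqrt 41 ^ 2 = 41 := Real.sq_sqrt (by norm_num)
  have h6 : (6:ℝ) < Real.sqrt 41 := by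
    nlinarith [Real.sqrt_nonneg 41]
  have h7 : Real.sqrt 41 < 7 := by
    nlinarith [Real.sqrt_nonneg 41]
  set s := Real.sqrt 41 with hsdef
  intro c₂ u₂ ta21 ta22
  have hc : c₂ = (11 - s) / 10 := rfl
  have h1 : 2*c₂ - 1 ≠ 0 := by rw [hc]; intro h; nlinarith
  have h2 : c₂ ≠ 0 := by rw [hc]; intro h; nlinarith
  have h3 : c₂ - 1 ≠ 0 := by rw [hc]; intro h; nlinarith
  show -(1 - u₂)/5 + ta21 + (1-c₂)^4 * ta22 = 1/5
  simp only [u₂, ta21, ta22]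
  field_simp
  rw [hc]
  ring_nf
  have e7 : s^7 = 68921*s := by linear_combination (s^5 + 41*s^3 + 1681*s) * hs
  have e6 : s^6 = 68921 := by linear_combination (s^4 + 41*s^2 + 1681) * hs
  have e5 : s^5 = 1681*s := by linear_combination (s^3 + 41*s) * hs
  have e4 : s^4 = 1681 := by linear_combination (s^2 + 41) * hs
  have e3 : s^3 = 41*s := by linear_combination s * hs
  rw [e4, e3, hs]
  ring
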